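/- Let c > 0, ε > 0, and x* ∈ [0, c). For every ε > 0 there exists δ̂ > 0 such that the following holds: if λ : [0,∞) → ℝ is continuous with λ(t) > δ̂ for all t, and x : [0,∞) → ℝ is differentiable with x'(t) = λ(t)(x(t) − x*)(x(t) − c) for all t ≥ 0 and 0 ≤ x(0) < c − ε, then |x(t) − x*| < ε for all sufficiently large t. -/

import Mathlib

open Set Filter MeasureTheory intervalIntegral

set_option maxHeartbeats 800000

/-- If `w' = g · w` on `[0,∞)` with `g` continuous on `[0,∞)`, then
`w t = w 0 · exp (∫₀ᵗ g)` for every `t ≥ 0`. -/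
lemma sis_exp_identity (g w : ℝ → ℝ) (hg : ContinuousOn g (Set.Ici 0))
    (hw : ∀ t ≥ (0 : ℝ), HasDerivAt w (g t * w t) t) :
    ∀ t ≥ (0 : ℝ), w t = w 0 * Real.exp (∫ s in (0 : ℝ)..t, g s) := by
  intro T hT
  set G : ℝ → ℝ := fun t => ∫ s in (0 : ℝ)..t, g s with hGdef
  have hsub : ∀ t : ℝ, 0 ≤ t → Set.uIcc (0 : ℝ) t ⊆ Set.Ici 0 := by
    intro t ht
    rw [Set.uIcc_of_le ht]
    exact fun s hs => hs.1
  have hgint : ∀ t : ℝ, 0 ≤ t → IntervalIntegrable g volume 0 t := fun t ht =>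
    (hg.mono (hsub t ht)).intervalIntegrable
  -- right derivative of G on [0, T)
  have hGd : ∀ t ∈ Set.Ico (0 : ℝ) T, HasDerivWithinAt G (g t) (Set.Ici t) t := by
    intro t ht
    have hmeas : StronglyMeasurableAtFilter g (nhdsWithin t (Set.Ioi t)) volume := by
      refine ⟨Set.Ici 0, ?_, hg.aestronglyMeasurable measurableSet_Ici⟩
      exact mem_of_superset self_mem_nhdsWithin
        (fun s hs => le_trans ht.1 (le_of_lt hs))
    have hct : ContinuousWithinAt g (Set.Ioi t) t :=
      (hg t ht.1).mono (fun s hs => le_trans ht.1 (le_of_lt hs))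
    exact intervalIntegral.integral_hasDerivWithinAt_right (hgint t ht.1) hmeas hct
  -- the function h = w · exp (−G) is constant on [0, T]
  have hGcont : ContinuousOn G (Set.Icc 0 T) := by
    have := intervalIntegral.continuousOn_primitive_interval
      (f := g) (μ := volume) (a := (0:ℝ)) (b := T)
      ((hg.mono (hsub T hT)).integrableOn_compact isCompact_uIcc)
    rwa [Set.uIcc_of_le hT] at this
  have hwcont : ContinuousOn w (Set.Icc 0 T) := fun t ht =>
    (hw t ht.1).continuousAt.continuousWithinAt
  have hhcont : ContinuousOn (fun t => w t * Real.exp (-(G t))) (Set.Icc 0 T) :=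
    hwcont.mul (hGcont.neg.rexp)
  have hhd : ∀ t ∈ Set.Ico (0 : ℝ) T,
      HasDerivWithinAt (fun t => w t * Real.exp (-(G t))) 0 (Set.Ici t) t := by
    intro t ht
    have hwt : HasDerivWithinAt w (g t * w t) (Set.Ici t) t :=
      (hw t ht.1).hasDerivWithinAt
    have hexp : HasDerivWithinAt (fun u => Real.exp (-(G u)))
        (Real.exp (-(G t)) * (-(g t))) (Set.Ici t) t := (hGd t ht).neg.exp
    have := hwt.mul hexp
    refine HasDerivWithinAt.congr_deriv this ?_
    ring
  have hconst := constant_of_has_deriv_right_zero hhcont hhd T ⟨hT, le_rfl⟩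
  have hG0 : G 0 = 0 := intervalIntegral.integral_same
  rw [hG0] at hconst
  simp only [neg_zero, Real.exp_zero, mul_one] at hconst
  have hpos := Real.exp_pos (G T)
  rw [Real.exp_neg] at hconst
  field_simp at hconst
  linarith [hconst]

/-- Lemma 3.4: for the controlled SIS ODE `x' = λ(t) (x − x*) (x − c)` with ideal state
`x* ∈ [0, c)`, for every `ε > 0` there is `δ̂ > 0` such that whenever `λ(t) > δ̂` for all
`t` and `0 ≤ x(0) < c − ε`, the trajectory satisfies `|x(t) − x*| < ε` for all
sufficiently large `t`. -/
theorem stmt_13 (c : ℝ) (hc : 0 < c) (xstar : ℝ) (hxstar : xstar ∈ Ico (0 : ℝ) c) :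
    ∀ ε > (0 : ℝ), ∃ δhat > (0 : ℝ),
      ∀ (lam : ℝ → ℝ) (x : ℝ → ℝ),
        Continuous lam → (∀ t : ℝ, δhat < lam t) →
        (∀ t ≥ (0 : ℝ), HasDerivAt x (lam t * (x t - xstar) * (x t - c)) t) →
        0 ≤ x 0 → x 0 < c - ε →
        ∀ᶠ t in atTop, |x t - xstar| < ε := by
  intro ε hε
  refine ⟨1, one_pos, ?_⟩
  intro lam x hlamc hlam hx hx0 hx0'
  obtain ⟨hxs0, hxsc⟩ := hxstar
  set m : ℝ := min ε (c - xstar) with hmdef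
  have hm : 0 < m := lt_min hε (by linarith)
  have hxcont : ContinuousOn x (Set.Ici 0) := fun t ht =>
    (hx t ht).continuousAt.continuousWithinAt
  set g : ℝ → ℝ := fun t => lam t * (x t - c) with hgdef
  set f : ℝ → ℝ := fun t => lam t * (x t - xstar) with hfdef
  have hgcont : ContinuousOn g (Set.Ici 0) :=
    hlamc.continuousOn.mul (hxcont.sub continuousOn_const)
  have hfcont : ContinuousOn f (Set.Ici 0) :=
    hlamc.continuousOn.mul (hxcont.sub continuousOn_const)
  have hv : ∀ t ≥ (0:ℝ), HasDerivAt (fun t => x t - xstar) (g t * (x t - xstar)) t := by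
    intro t ht
    have := (hx t ht).sub_const xstar
    refine HasDerivAt.congr_deriv this ?_
    simp only [hgdef]; ring
  have hu : ∀ t ≥ (0:ℝ), HasDerivAt (fun t => c - x t) (f t * (c - x t)) t := by
    intro t ht
    have := (hx t ht).const_sub c
    refine HasDerivAt.congr_deriv this ?_
    simp only [hfdef]; ring
  have idv := sis_exp_identity g (fun t => x t - xstar) hgcont hv
  have idu := sis_exp_identity f (fun t => c - x t) hfcont hu
  -- main bound
  have key : ∀ t ≥ (0:ℝ), |x t - xstar| ≤ |x 0 - xstar| * Real.exp (-(m * t)) := by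
    rcases lt_trichotomy (x 0) xstar with hlt | heq | hgt
    · -- x stays below xstar
      have hxlt : ∀ t ≥ (0:ℝ), x t < xstar := by
        intro t ht
        have := idv t ht
        nlinarith [Real.exp_pos (∫ s in (0:ℝ)..t, g s)]
      have hgle : ∀ s ≥ (0:ℝ), g s ≤ -m := by
        intro s hs
        have h1 := hlam s
        have h2 := hxlt s hs
        have h3 : m ≤ c - xstar := min_le_right _ _
        have h4 : x s - c ≤ -m := by linarith
        have h5 : lam s * (x s - c) ≤ 1 * (x s - c) :=
          mul_le_mul_of_nonpos_right (le_of_lt h1) (by linarith)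
        show lam s * (x s - c) ≤ -m
        linarith
      intro t ht
      have hGle : (∫ s in (0:ℝ)..t, g s) ≤ -(m * t) := by
        have hint : IntervalIntegrable g volume 0 t := by
          apply (hgcont.mono ?_).intervalIntegrable
          rw [Set.uIcc_of_le ht]; exact fun s hs => hs.1
        calc (∫ s in (0:ℝ)..t, g s) ≤ ∫ s in (0:ℝ)..t, (-m : ℝ) :=
              intervalIntegral.integral_mono_on ht hint intervalIntegrable_const
                (fun s hs => hgle s hs.1)
          _ = -(m * t) := by simp [mul_comm]
      calc |x t - xstar| = |x 0 - xstar| * Real.exp (∫ s in (0:ℝ)..t, g s) := by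
            rw [idv t ht, abs_mul, abs_of_pos (Real.exp_pos _)]
        _ ≤ |x 0 - xstar| * Real.exp (-(m * t)) :=
            mul_le_mul_of_nonneg_left (Real.exp_le_exp.2 hGle) (abs_nonneg _)
    · -- x ≡ xstar
      intro t ht
      have := idv t ht
      rw [heq, sub_self, zero_mul] at this
      rw [this, heq, sub_self, abs_zero]
      positivity
    · -- x stays above xstar, and below c − ε
      have hxgt : ∀ t ≥ (0:ℝ), xstar < x t := by
        intro t ht
        have := idv t ht
        nlinarith [Real.exp_pos (∫ s in (0:ℝ)..t, g s)]
      have hub : ∀ t ≥ (0:ℝ), x t ≤ c - ε := by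
        intro t ht
        have hF : (0:ℝ) ≤ ∫ s in (0:ℝ)..t, f s := by
          apply intervalIntegral.integral_nonneg ht
          intro s hs
          have h1 := hlam s
          have h2 := hxgt s hs.1
          show 0 ≤ lam s * (x s - xstar)
          nlinarith
        have := idu t ht
        have hexp : (1:ℝ) ≤ Real.exp (∫ s in (0:ℝ)..t, f s) := Real.one_le_exp hF
        nlinarith
      have hgle : ∀ s ≥ (0:ℝ), g s ≤ -m := by
        intro s hs
        have h1 := hlam s
        have h2 := hub s hs
        have h3 : m ≤ ε := min_le_left _ _
        have h4 : x s - c ≤ -m := by linarith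
        have h5 : lam s * (x s - c) ≤ 1 * (x s - c) :=
          mul_le_mul_of_nonpos_right (le_of_lt h1) (by linarith)
        show lam s * (x s - c) ≤ -m
        linarith
      intro t ht
      have hGle : (∫ s in (0:ℝ)..t, g s) ≤ -(m * t) := by
        have hint : IntervalIntegrable g volume 0 t := by
          apply (hgcont.mono ?_).intervalIntegrable
          rw [Set.uIcc_of_le ht]; exact fun s hs => hs.1
        calc (∫ s in (0:ℝ)..t, g s) ≤ ∫ s in (0:ℝ)..t, (-m : ℝ) :=
              intervalIntegral.integral_mono_on ht hint intervalIntegrable_const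
                (fun s hs => hgle s hs.1)
          _ = -(m * t) := by simp [mul_comm]
      calc |x t - xstar| = |x 0 - xstar| * Real.exp (∫ s in (0:ℝ)..t, g s) := by
            rw [idv t ht, abs_mul, abs_of_pos (Real.exp_pos _)]
        _ ≤ |x 0 - xstar| * Real.exp (-(m * t)) :=
            mul_le_mul_of_nonneg_left (Real.exp_le_exp.2 hGle) (abs_nonneg _)
  -- conclude
  have htend : Tendsto (fun t : ℝ => |x 0 - xstar| * Real.exp (-(m * t))) atTop (nhds 0) := by
    have h1 : Tendsto (fun t : ℝ => m * t) atTop atTop :=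
      Tendsto.const_mul_atTop hm tendsto_id
    have h2 : Tendsto (fun t : ℝ => -(m * t)) atTop atBot :=
      tendsto_neg_atTop_atBot.comp h1
    have h3 := Real.tendsto_exp_atBot.comp h2
    have := h3.const_mul (|x 0 - xstar|)
    simpa using this
  filter_upwards [eventually_ge_atTop (0:ℝ), htend.eventually_lt_const hε] with t ht hlt
  exact lt_of_le_of_lt (key t ht) hlt
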